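/- Let K be a unital ring with trivial left annihilator (x * y = 0 for all y ∈ K implies x = 0), and let R be the polynomial ring in k commuting indeterminates over K, realized as AddMonoidAlgebra K (Fin k →₀ ℕ). Let A be a right ideal of R whose right annihilator A^r = { t ∈ R | ∀ a ∈ A, a * t = 0 } is non-trivial. Then there exists a non-zero constant c ∈ K (a non-zero scalar multiple of the monomial of exponent 0) such that a * c = 0 for every a ∈ A. -/

import Mathlib

/-- Let `K` be a unital ring with trivial left annihilator, and let `R` be the polynomial
ring in `k` commuting indeterminates over `K`, realized as
`AddMonoidAlgebra K (Fin k →₀ ℕ)`.  If a right ideal `A` of `R` has a non-trivial right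
annihilator, then there is a non-zero constant `c ∈ K` with `a * c = 0` for all `a ∈ A`. -/
theorem mccoy_right_ideal_of_trivial_left_annihilator {K : Type*} [Ring K] {k : ℕ}
    (hK : ∀ x : K, (∀ y : K, x * y = 0) → x = 0)
    (A : AddSubgroup (AddMonoidAlgebra K (Fin k →₀ ℕ)))
    (hA : ∀ a ∈ A, ∀ t : AddMonoidAlgebra K (Fin k →₀ ℕ), a * t ∈ A)
    (hann : ∃ t : AddMonoidAlgebra K (Fin k →₀ ℕ), t ≠ 0 ∧ ∀ a ∈ A, a * t = 0) :
    ∃ c : K, c ≠ 0 ∧ ∀ a ∈ A, a * AddMonoidAlgebra.single (0 : Fin k →₀ ℕ) c = 0 := by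
  classical
  set M := (Fin k →₀ ℕ) with hM
  have hex : ∃ n, ∃ t : AddMonoidAlgebra K M, t ≠ 0 ∧ (∀ a ∈ A, a * t = 0) ∧
      t.coeff.support.card = n := by
    obtain ⟨t, ht, h⟩ := hann
    exact ⟨_, t, ht, h, rfl⟩
  obtain ⟨t, ht0, htann, htcard⟩ := Nat.find_spec hex
  set n := Nat.find hex with hn
  have hmin : ∀ u : AddMonoidAlgebra K M, (∀ a ∈ A, a * u = 0) → u.coeff.support.card < n →
      u = 0 := by
    intro u hu hcard
    by_contra h
    exact Nat.find_min hex hcard ⟨u, h, hu, rfl⟩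
  have hsne : (t.coeff.support.image (toLex : M → Lex M)).Nonempty :=
    Finset.image_nonempty.2 (Finsupp.support_nonempty_iff.2 (mt AddMonoidAlgebra.coeff_eq_zero.1 ht0))
  set μ : Lex M := (t.coeff.support.image toLex).max' hsne with hμ
  have hμmem : ofLex μ ∈ t.coeff.support := by
    obtain ⟨x, hx, hxe⟩ := Finset.mem_image.1 ((t.coeff.support.image toLex).max'_mem hsne)
    have hx' : x = ofLex μ := by rw [hμ, ← hxe]; rfl
    rwa [← hx']
  have hle : ∀ q ∈ t.coeff.support, toLex q ≤ μ := fun q hq =>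
    Finset.le_max' _ _ (Finset.mem_image_of_mem _ hq)
  -- main induction
  have key : ∀ N : ℕ, ∀ a ∈ A, ∀ m : M,
      (a.coeff.support.filter (fun p => toLex m < toLex p)).card ≤ N →
      AddMonoidAlgebra.single (0 : M) (a.coeff m) * t = 0 := by
    intro N
    induction N using Nat.strong_induction_on with
    | _ N ih =>
      intro a ha m hcard
      -- step 1: a m * t (ofLex μ) = 0
      have h0 : ∑ pq ∈ Finset.HasAntidiagonal.antidiagonal (m + ofLex μ), a.coeff pq.1 * t.coeff pq.2 = 0 := by
        rw [← AddMonoidAlgebra.coeff_mul_antidiag a t _ _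
          (fun {pq} => Finset.HasAntidiagonal.mem_antidiagonal), htann a ha]
        rfl
      have hterm : ∀ pq : M × M, pq ∈ Finset.HasAntidiagonal.antidiagonal (m + ofLex μ) →
          pq ≠ (m, ofLex μ) → a.coeff pq.1 * t.coeff pq.2 = 0 := by
        rintro ⟨p, q⟩ hpq hne
        have hpq' : p + q = m + ofLex μ := Finset.HasAntidiagonal.mem_antidiagonal.1 hpq
        by_cases hps : p ∈ a.coeff.support
        · by_cases hqs : q ∈ t.coeff.support
          · have hqle : toLex q ≤ μ := hle q hqs
            rcases eq_or_lt_of_le hqle with heq | hlt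
            · have : q = ofLex μ := toLex.injective heq
              subst this
              have : p = m := by
                have := hpq'
                exact add_right_cancel this
              exact absurd (by rw [this]) hne
            · -- toLex q < μ, deduce toLex m < toLex p
              have hmp : toLex m < toLex p := by
                by_contra hh
                push_neg at hh
                have : toLex p + toLex q < toLex m + toLex (ofLex μ) :=
                  add_lt_add_of_le_of_lt hh hlt
                rw [← toLex_add, ← toLex_add, hpq'] at this
                exact lt_irrefl _ this
              -- apply inner induction hypothesis
              have hpf : p ∈ a.coeff.support.filter (fun p => toLex m < toLex p) :=
                Finset.mem_filter.2 ⟨hps, hmp⟩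
              have hsub : a.coeff.support.filter (fun r => toLex p < toLex r) ⊆
                  (a.coeff.support.filter (fun r => toLex m < toLex r)).erase p := by
                intro r hr
                obtain ⟨hr1, hr2⟩ := Finset.mem_filter.1 hr
                refine Finset.mem_erase.2 ⟨?_, Finset.mem_filter.2 ⟨hr1, hmp.trans hr2⟩⟩
                rintro rfl
                exact lt_irrefl _ hr2
              have hlt' : (a.coeff.support.filter (fun r => toLex p < toLex r)).card < N :=
                lt_of_le_of_lt (Finset.card_le_card hsub)
                  (lt_of_lt_of_le (Finset.card_erase_lt_of_mem hpf) hcard)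
              have := ih _ hlt' a ha p le_rfl
              have := congrArg (fun f => f.coeff q) this
              simpa [AddMonoidAlgebra.coeff_single_zero_mul] using this
          · rw [Finsupp.notMem_support_iff.1 hqs, mul_zero]
        · rw [Finsupp.notMem_support_iff.1 hps, zero_mul]
      have hc : a.coeff m * t.coeff (ofLex μ) = 0 := by
        have := Finset.sum_eq_single_of_mem (s := Finset.HasAntidiagonal.antidiagonal (m + ofLex μ))
          (f := fun pq => a.coeff pq.1 * t.coeff pq.2) (m, ofLex μ)
          (Finset.HasAntidiagonal.mem_antidiagonal.2 rfl) hterm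
        rw [h0] at this
        exact this.symm
      -- step 2: minimality
      set u : AddMonoidAlgebra K M := AddMonoidAlgebra.single (0 : M) (a.coeff m) * t with hu
      have huann : ∀ b ∈ A, b * u = 0 := by
        intro b hb
        rw [hu, ← mul_assoc]
        exact htann _ (hA b hb _)
      have husupp : u.coeff.support ⊆ t.coeff.support.erase (ofLex μ) := by
        intro q hq
        have hq' : u.coeff q ≠ 0 := Finsupp.mem_support_iff.1 hq
        rw [hu, AddMonoidAlgebra.coeff_single_zero_mul] at hq'
        refine Finset.mem_erase.2 ⟨?_, Finsupp.mem_support_iff.2 fun h => hq' (by rw [h, mul_zero])⟩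
        rintro rfl
        exact hq' hc
      exact hmin u huann (lt_of_le_of_lt (Finset.card_le_card husupp)
        (htcard ▸ Finset.card_erase_lt_of_mem hμmem))
  refine ⟨t.coeff (ofLex μ), Finsupp.mem_support_iff.1 hμmem, fun a ha => ?_⟩
  ext x
  rw [AddMonoidAlgebra.coeff_mul_single_zero]
  have := key _ a ha x le_rfl
  have := congrArg (fun f => f.coeff (ofLex μ)) this
  simpa [AddMonoidAlgebra.coeff_single_zero_mul] using this
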